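/- arXiv:2008.07055 — 5 statements merged into one kernel-verified Lean document; each statement's English description precedes it below -/
import Mathlib

section
/- Let y ∈ {−1,1}, let ȳ ∈ ℝ, let Y be uniformly distributed on (−1,1), and set ŷ := sign(ȳ − Y). Then 2·E[L₀₁(y, ŷ)] ≤ Lₕᵢ(y, ȳ), where L₀₁(y,ŷ) = 1 if y ≠ ŷ and 0 otherwise, and Lₕᵢ(y,ȳ) = max(0, 1 − y·ȳ) is the hinge loss. -/
open MeasureTheory

noncomputable def sgn (t : ℝ) : ℝ := if 0 ≤ t then 1 else -1

noncomputable def zeroOneLoss (y yhat : ℝ) : ℝ := if y = yhat then 0 else 1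

noncomputable def hingeLoss (y ybar : ℝ) : ℝ := max 0 (1 - y * ybar)

/-- With `Y ~ Uniform(-1,1)` and `ŷ = sign(ȳ - Y)`, twice the expected zero-one
loss is bounded by the hinge loss. -/
theorem expected_zero_one_le_hinge (y : ℝ) (hy : y = 1 ∨ y = -1) (ybar : ℝ) :
    2 * ((2:ℝ)⁻¹ * ∫ t in Set.Ioo (-1:ℝ) 1, zeroOneLoss y (sgn (ybar - t)))
      ≤ hingeLoss y ybar := by
  rcases hy with rfl | rfl
  · have hfun : ∀ t : ℝ, zeroOneLoss 1 (sgn (ybar - t))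
        = (Set.Ioi ybar).indicator (fun _ => (1:ℝ)) t := by
      intro t
      simp only [zeroOneLoss, sgn, Set.indicator, Set.mem_Ioi]
      by_cases h : 0 ≤ ybar - t
      · simp [h, not_lt.mpr (by linarith : t ≤ ybar)]
      · norm_num [h, (by linarith : ybar < t)]
    simp_rw [hfun]
    rw [MeasureTheory.setIntegral_indicator measurableSet_Ioi,
      MeasureTheory.setIntegral_const]
    have hset : Set.Ioo (-1:ℝ) 1 ∩ Set.Ioi ybar = Set.Ioo (max ybar (-1)) 1 := by
      ext t; simp only [Set.mem_inter_iff, Set.mem_Ioo, Set.mem_Ioi, max_lt_iff]; tauto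
    rw [hset, Measure.real, Real.volume_Ioo, ENNReal.toReal_ofReal']
    simp only [smul_eq_mul, mul_one, hingeLoss, one_mul]
    have h1 : max (1 - max ybar (-1)) 0 ≤ max 0 (1 - ybar) := by
      apply max_le
      · have := le_max_left ybar (-1:ℝ)
        have : (1:ℝ) - max ybar (-1) ≤ 1 - ybar := by linarith
        exact this.trans (le_max_right _ _)
      · exact le_max_left _ _
    linarith
  · have hfun : ∀ t : ℝ, zeroOneLoss (-1) (sgn (ybar - t))
        = (Set.Iic ybar).indicator (fun _ => (1:ℝ)) t := by
      intro t
      simp only [zeroOneLoss, sgn, Set.indicator, Set.mem_Iic]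
      by_cases h : 0 ≤ ybar - t
      · norm_num [h, (by linarith : t ≤ ybar)]
      · simp [h, not_le.mpr (by linarith : ybar < t)]
    simp_rw [hfun]
    rw [MeasureTheory.setIntegral_indicator measurableSet_Iic,
      MeasureTheory.setIntegral_const]
    have hv : volume (Set.Ioo (-1:ℝ) 1 ∩ Set.Iic ybar)
        = ENNReal.ofReal (min ybar 1 + 1) := by
      apply le_antisymm
      · have hsub : Set.Ioo (-1:ℝ) 1 ∩ Set.Iic ybar
            ⊆ Set.Icc (-1) (min ybar 1) := by
          rintro t ⟨⟨h2, h3⟩, h1⟩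
          exact ⟨h2.le, le_min h1 h3.le⟩
        calc volume (Set.Ioo (-1:ℝ) 1 ∩ Set.Iic ybar)
            ≤ volume (Set.Icc (-1) (min ybar 1)) := measure_mono hsub
          _ = ENNReal.ofReal (min ybar 1 + 1) := by
              rw [Real.volume_Icc]; ring_nf
      · have hsub : Set.Ioo (-1:ℝ) (min ybar 1)
            ⊆ Set.Ioo (-1:ℝ) 1 ∩ Set.Iic ybar := by
          rintro t ⟨h1, h2⟩
          exact ⟨⟨h1, (lt_min_iff.mp h2).2⟩, (lt_min_iff.mp h2).1.le⟩
        calc ENNReal.ofReal (min ybar 1 + 1)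
            = volume (Set.Ioo (-1:ℝ) (min ybar 1)) := by
              rw [Real.volume_Ioo]; ring_nf
          _ ≤ _ := measure_mono hsub
    rw [Measure.real, hv, ENNReal.toReal_ofReal']
    simp only [smul_eq_mul, mul_one, hingeLoss, neg_one_mul, sub_neg_eq_add]
    have h1 : max (min ybar 1 + 1) 0 ≤ max 0 (1 + ybar) := by
      apply max_le
      · have := min_le_left ybar (1:ℝ)
        have : min ybar 1 + 1 ≤ 1 + ybar := by linarith
        exact this.trans (le_max_right _ _)
      · exact le_max_left _ _
    linarith
end

section
/- Let H be a real inner product space, η > 0, γ > 0, and let w, z ∈ H. Define w' := P_γ(w − η z), where P_γ is the projection onto the closed origin-centered ball of radius γ. Then for any u with ‖u‖ ≤ γ, ⟨w − u, z⟩ ≤ (1/(2η))·(‖w − u‖² − ‖w' − u‖² + η²‖z‖²). -/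
open RealInnerProductSpace

noncomputable def ballProj {H : Type*} [NormedAddCommGroup H] [InnerProductSpace ℝ H]
    (γ : ℝ) (w : H) : H :=
  if ‖w‖ ≤ γ then w else (γ / ‖w‖) • w

lemma ballProj_contract {H : Type*} [NormedAddCommGroup H] [InnerProductSpace ℝ H]
    (γ : ℝ) (hγ : 0 < γ) (v u : H) (hu : ‖u‖ ≤ γ) :
    ‖ballProj γ v - u‖ ^ 2 ≤ ‖v - u‖ ^ 2 := by
  unfold ballProj
  split_ifs with h
  · exact le_rfl
  · push_neg at h
    have hv : (0:ℝ) < ‖v‖ := lt_trans hγ h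
    set t : ℝ := γ / ‖v‖ with ht
    have ht0 : 0 < t := div_pos hγ hv
    have ht1 : t < 1 := (div_lt_one hv).mpr h
    have hcs : ⟪v, u⟫ ≤ t * ‖v‖ ^ 2 := by
      calc ⟪v, u⟫ ≤ ‖v‖ * ‖u‖ := real_inner_le_norm v u
        _ ≤ ‖v‖ * γ := by nlinarith
        _ = t * ‖v‖ ^ 2 := by field_simp [ht]; rw [ht, mul_div_cancel₀ _ hv.ne']
    have e1 : ‖t • v - u‖ ^ 2 = t^2 * ‖v‖^2 - 2 * t * ⟪v, u⟫ + ‖u‖^2 := by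
      rw [norm_sub_sq_real, norm_smul, real_inner_smul_left]
      simp [abs_of_pos ht0, mul_pow]
      ring
    have e2 : ‖v - u‖ ^ 2 = ‖v‖^2 - 2 * ⟪v, u⟫ + ‖u‖^2 := by
      rw [norm_sub_sq_real]
    nlinarith [sq_nonneg (1 - t), sq_nonneg ‖v‖]

theorem ogd_step_inequality {H : Type*} [NormedAddCommGroup H] [InnerProductSpace ℝ H]
    (η γ : ℝ) (hη : 0 < η) (hγ : 0 < γ) (w z u : H) (hu : ‖u‖ ≤ γ) :
    ⟪w - u, z⟫ ≤
      (1 / (2 * η)) * (‖w - u‖ ^ 2 - ‖ballProj γ (w - η • z) - u‖ ^ 2 + η ^ 2 * ‖z‖ ^ 2) := by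
  have key := ballProj_contract γ hγ (w - η • z) u hu
  have expand : ‖w - η • z - u‖ ^ 2
      = ‖w - u‖ ^ 2 - 2 * η * ⟪w - u, z⟫ + η ^ 2 * ‖z‖ ^ 2 := by
    have : w - η • z - u = (w - u) - η • z := by abel
    rw [this, norm_sub_sq_real, real_inner_smul_right, norm_smul]
    simp [abs_of_pos hη, mul_pow]
    ring
  rw [div_mul_eq_mul_div, le_div_iff₀ (by positivity)]
  nlinarith
end

section
/- Quasi-dimension upper bound via binary factorization: Let U ∈ {−1,1}^{p×T} admit a factorization U = U* Cᵀ where U* ∈ {−1,1}^{p×m} and C ∈ {0,1}^{T×m} is a block expansion matrix. Let M ∈ ℝ^{p×p} and N ∈ ℝ^{T×T} be symmetric positive definite, and let γ = 1/√m. Then the quasi-dimension D^γ_{M,N}(U) := inf over row-normalized P ∈ ℝ^{p×d}, Q ∈ ℝ^{T×d} with P Qᵀ = γU of [tr(Pᵀ M P)·R_M + tr(Qᵀ N Q)·R_N] satisfies D^γ_{M,N}(U) ≤ γ²·tr((U*)ᵀ M U*)·R_M + tr(Cᵀ N C)·R_N, where R_M := max_i (M⁻¹)_{ii} and R_N :=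 max_j (N⁻¹)_{jj}. -/
open Matrix
open scoped BigOperators

lemma aux_trace_nonneg {n d : ℕ} (A : Matrix (Fin n) (Fin n) ℝ) (hA : A.PosSemidef)
    (P : Matrix (Fin n) (Fin d) ℝ) : 0 ≤ (P.transpose * A * P).trace := by
  rw [Matrix.trace]
  apply Finset.sum_nonneg
  intro k _
  have h := hA.dotProduct_mulVec_nonneg (fun i => P i k)
  simp only [star_trivial, dotProduct, Matrix.mulVec] at h
  simp only [Matrix.diag_apply, Matrix.mul_apply, Matrix.transpose_apply]
  calc (0:ℝ) ≤ ∑ i, P i k * ∑ j, A i j * P j k := h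
    _ = ∑ j, (∑ i, P i k * A i j) * P j k := by
        simp_rw [Finset.mul_sum, Finset.sum_mul]; rw [Finset.sum_comm]
        exact Finset.sum_congr rfl fun i _ => Finset.sum_congr rfl fun j _ => by ring

lemma aux_diag_pos {n : ℕ} (A : Matrix (Fin n) (Fin n) ℝ) (hA : A.PosDef) (i : Fin n) :
    0 < A i i := by
  have h := hA.dotProduct_mulVec_pos (x := Pi.single i 1) (by intro h; have := congrFun h i; simp at this)
  simpa [dotProduct, Matrix.mulVec, Pi.single_apply] using h

/-- Quasi-dimension upper bound via binary factorization (Theorem `thm:itdit`). -/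
theorem quasi_dimension_upper_bound {p T m : ℕ} (hp : 0 < p) (hT : 0 < T) (hm : 0 < m)
    (U : Matrix (Fin p) (Fin T) ℝ) (hU : ∀ i j, U i j = 1 ∨ U i j = -1)
    (Ustar : Matrix (Fin p) (Fin m) ℝ) (hUstar : ∀ i j, Ustar i j = 1 ∨ Ustar i j = -1)
    (C : Matrix (Fin T) (Fin m) ℝ)
    (hC01 : ∀ i j, C i j = 0 ∨ C i j = 1)
    (hCrow : ∀ i, ∑ j, C i j = 1)
    (hCrank : C.rank = m)
    (hfact : U = Ustar * C.transpose)
    (M : Matrix (Fin p) (Fin p) ℝ) (N : Matrix (Fin T) (Fin T) ℝ)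
    (hM : M.PosDef) (hN : N.PosDef)
    (γ RM RN : ℝ) (hγ : γ = 1 / Real.sqrt m)
    (hRM : RM = Finset.univ.sup' (Finset.univ_nonempty_iff.mpr ⟨⟨0, hp⟩⟩) (fun i => M⁻¹ i i))
    (hRN : RN = Finset.univ.sup' (Finset.univ_nonempty_iff.mpr ⟨⟨0, hT⟩⟩) (fun j => N⁻¹ j j)) :
    sInf { c : ℝ | ∃ (d : ℕ) (P : Matrix (Fin p) (Fin d) ℝ) (Q : Matrix (Fin T) (Fin d) ℝ),
        (∀ i, ∑ k, (P i k) ^ 2 = 1) ∧ (∀ j, ∑ k, (Q j k) ^ 2 = 1) ∧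
        P * Q.transpose = γ • U ∧
        c = (P.transpose * M * P).trace * RM + (Q.transpose * N * Q).trace * RN }
      ≤ γ ^ 2 * (Ustar.transpose * M * Ustar).trace * RM + (C.transpose * N * C).trace * RN := by
  have hmR : (0:ℝ) < (m:ℝ) := Nat.cast_pos.mpr hm
  have hγ2 : γ ^ 2 = 1 / (m:ℝ) := by
    rw [hγ, div_pow, one_pow, Real.sq_sqrt hmR.le]
  have hRM0 : 0 ≤ RM := by
    rw [hRM]
    exact le_trans (aux_diag_pos _ hM.inv ⟨0, hp⟩).le
      (Finset.le_sup' (fun i => M⁻¹ i i) (Finset.mem_univ _))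
  have hRN0 : 0 ≤ RN := by
    rw [hRN]
    exact le_trans (aux_diag_pos _ hN.inv ⟨0, hT⟩).le
      (Finset.le_sup' (fun j => N⁻¹ j j) (Finset.mem_univ _))
  apply csInf_le
  · refine ⟨0, fun c hc => ?_⟩
    obtain ⟨d, P, Q, _, _, _, rfl⟩ := hc
    have h1 := aux_trace_nonneg M hM.posSemidef P
    have h2 := aux_trace_nonneg N hN.posSemidef Q
    positivity
  · refine ⟨m, γ • Ustar, C, ?_, ?_, ?_, ?_⟩
    · intro i
      have : ∀ k, ((γ • Ustar) i k) ^ 2 = γ ^ 2 := by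
        intro k
        rcases hUstar i k with h | h <;> simp [h, mul_pow]
      rw [Finset.sum_congr rfl fun k _ => this k]
      simp [hγ2, Finset.sum_const]
      field_simp
    · intro j
      have : ∀ k, (C j k) ^ 2 = C j k := by
        intro k
        rcases hC01 j k with h | h <;> simp [h]
      rw [Finset.sum_congr rfl fun k _ => this k]
      exact hCrow j
    · rw [Matrix.smul_mul, ← hfact]
    · rw [Matrix.transpose_smul, Matrix.smul_mul, Matrix.smul_mul, Matrix.mul_smul,
        smul_smul, Matrix.trace_smul, ← pow_two, smul_eq_mul, mul_assoc]
end

section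
/- Specialist Hedge potential inequality: Let E be a finite set of specialists, η > 0, W ⊆ E nonempty, p : E → (0,1] with Σ_k p(k) = 1, and c : W → [0,1]. Define v(k) := p(k)/p(W) for k ∈ W where p(W) := Σ_{k∈W} p(k). Define p'(k) := p(k) for k ∉ W and p'(k) := p(k)·exp(−η c(k))·p(W)/(Σ_{k'∈W} p(k') exp(−η c(k'))) for k ∈ W. Let u : E → [0,1] be any probability distribution with u(k) > 0 wherever p(k) > 0, let u(W) := Σ_{k∈W} u(k) > 0, and ū(k) := u(k)/u(W) for k ∈ W. Then D(u‖p) − D(u‖p') ≥ u(W)·η·(⟨v, c⟩ − ⟨ū, c⟩) − u(W)·η²/2, where D(u‖p) = Σ_k u(k) log(u(k)/p(k)) and ⟨a, b⟩ = Σ_{k∈W} a(k) b(k). -/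
open scoped BigOperators

lemma exp_neg_le_quad {x : ℝ} (hx : 0 ≤ x) : Real.exp (-x) ≤ 1 - x + x ^ 2 / 2 := by
  have h : MonotoneOn (fun s : ℝ => 1 - s + s ^ 2 / 2 - Real.exp (-s)) (Set.Ici 0) := by
    apply monotoneOn_of_deriv_nonneg (convex_Ici 0)
    · fun_prop
    · fun_prop
    · intro s hs
      have hd : deriv (fun s : ℝ => 1 - s + s ^ 2 / 2 - Real.exp (-s)) s
          = -1 + s + Real.exp (-s) := by
        have h1 : HasDerivAt (fun s : ℝ => Real.exp (-s)) (-Real.exp (-s)) s := by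
          exact ((Real.hasDerivAt_exp (-s)).comp s (hasDerivAt_neg s)).congr_deriv (by ring)
        have h2 : HasDerivAt (fun s : ℝ => 1 - s + s ^ 2 / 2)
            (0 - 1 + (2 * s ^ 1) / 2) s :=
          ((hasDerivAt_const s (1:ℝ)).sub (hasDerivAt_id s)).add
            ((hasDerivAt_pow 2 s).div_const 2)
        have := (h2.sub h1).deriv
        exact this.trans (by ring)
      rw [hd]
      have := Real.add_one_le_exp (-s)
      linarith
  have h0 : (fun s : ℝ => 1 - s + s ^ 2 / 2 - Real.exp (-s)) 0 = 0 := by simp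
  have := h (Set.self_mem_Ici) (Set.mem_Ici.mpr hx) hx
  rw [h0] at this
  linarith [this]

/-- Relative entropy (KL divergence) between finitely supported distributions. -/
noncomputable def relEnt {E : Type*} [Fintype E] (a b : E → ℝ) : ℝ :=
  ∑ k, a k * Real.log (a k / b k)

/-- Specialist Hedge potential inequality. -/
theorem specialist_hedge_potential {E : Type*} [Fintype E] [DecidableEq E]
    (η : ℝ) (hη : 0 < η)
    (W : Finset E) (hW : W.Nonempty)
    (p : E → ℝ) (hp_pos : ∀ k, 0 < p k) (hp_le : ∀ k, p k ≤ 1) (hp_sum : ∑ k, p k = 1)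
    (c : E → ℝ) (hc : ∀ k ∈ W, 0 ≤ c k ∧ c k ≤ 1)
    (u : E → ℝ) (hu_nonneg : ∀ k, 0 ≤ u k) (hu_le : ∀ k, u k ≤ 1) (hu_sum : ∑ k, u k = 1)
    (hu_pos : ∀ k, 0 < p k → 0 < u k)
    (huW : 0 < ∑ k ∈ W, u k)
    (p' : E → ℝ)
    (hp' : ∀ k, p' k = if k ∈ W then
        p k * Real.exp (-η * c k) * (∑ k' ∈ W, p k') /
          (∑ k' ∈ W, p k' * Real.exp (-η * c k'))
      else p k) :
    relEnt u p - relEnt u p' ≥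
      (∑ k ∈ W, u k) * η *
          ((∑ k ∈ W, (p k / ∑ k' ∈ W, p k') * c k)
            - ∑ k ∈ W, (u k / ∑ k' ∈ W, u k') * c k)
        - (∑ k ∈ W, u k) * η ^ 2 / 2 := by
  set pW := ∑ k' ∈ W, p k' with hpW_def
  set Z := ∑ k' ∈ W, p k' * Real.exp (-η * c k') with hZ_def
  set uW := ∑ k' ∈ W, u k' with huW_def
  have hpW_pos : 0 < pW := Finset.sum_pos (fun k _ => hp_pos k) hW
  have hZ_pos : 0 < Z := Finset.sum_pos
    (fun k _ => mul_pos (hp_pos k) (Real.exp_pos _)) hW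
  have hu_pos' : ∀ k, 0 < u k := fun k => hu_pos k (hp_pos k)
  have hp'_pos : ∀ k, 0 < p' k := by
    intro k
    rw [hp' k]
    split
    · exact div_pos (mul_pos (mul_pos (hp_pos k) (Real.exp_pos _)) hpW_pos) hZ_pos
    · exact hp_pos k
  set A := ∑ k ∈ W, (p k / pW) * c k with hA_def
  -- Step 1: rewrite the difference of relative entropies
  have hstep1 : relEnt u p - relEnt u p' =
      ∑ k ∈ W, u k * (-η * c k) - uW * Real.log (Z / pW) := by
    unfold relEnt
    rw [← Finset.sum_sub_distrib]
    have hterm : ∀ k, u k * Real.log (u k / p k) - u k * Real.log (u k / p' k)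
        = u k * Real.log (p' k / p k) := by
      intro k
      rw [← mul_sub, Real.log_div (hu_pos' k).ne' (hp_pos k).ne',
        Real.log_div (hu_pos' k).ne' (hp'_pos k).ne',
        Real.log_div (hp'_pos k).ne' (hp_pos k).ne']
      ring
    simp_rw [hterm]
    rw [← Finset.sum_subset (Finset.subset_univ W)
      (by intro k _ hk; rw [hp' k, if_neg hk, div_self (hp_pos k).ne', Real.log_one,
        mul_zero])]
    have hterm2 : ∀ k ∈ W, u k * Real.log (p' k / p k)
        = u k * (-η * c k) - u k * Real.log (Z / pW) := by
      intro k hk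
      have hratio : p' k / p k = Real.exp (-η * c k) * pW / Z := by
        rw [hp' k, if_pos hk]
        field_simp [(hp_pos k).ne', hZ_pos.ne']
      rw [hratio, Real.log_div (by positivity) hZ_pos.ne',
        Real.log_mul (Real.exp_pos _).ne' hpW_pos.ne', Real.log_exp,
        Real.log_div hZ_pos.ne' hpW_pos.ne']
      ring
    rw [Finset.sum_congr rfl hterm2, Finset.sum_sub_distrib, ← Finset.sum_mul]
  -- Step 2: bound Z
  have hstep2 : Z ≤ pW * (1 - η * A + η ^ 2 / 2) := by
    have hpA : pW * A = ∑ k ∈ W, p k * c k := by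
      rw [hA_def, Finset.mul_sum]
      refine Finset.sum_congr rfl fun k hk => ?_
      field_simp
    have hbound : ∀ k ∈ W, p k * Real.exp (-η * c k)
        ≤ p k * (1 - η * c k + η ^ 2 / 2) := by
      intro k hk
      obtain ⟨hc0, hc1⟩ := hc k hk
      have hx : 0 ≤ η * c k := by positivity
      have h1 : Real.exp (-η * c k) ≤ 1 - η * c k + (η * c k) ^ 2 / 2 := by
        rw [neg_mul]; exact exp_neg_le_quad hx
      have hcsq : c k ^ 2 ≤ 1 := by nlinarith
      have h2 : (η * c k) ^ 2 ≤ η ^ 2 := by nlinarith [sq_nonneg η]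
      have h3 : Real.exp (-η * c k) ≤ 1 - η * c k + η ^ 2 / 2 := by linarith
      exact mul_le_mul_of_nonneg_left h3 (hp_pos k).le
    calc Z ≤ ∑ k ∈ W, p k * (1 - η * c k + η ^ 2 / 2) := Finset.sum_le_sum hbound
    _ = pW - η * (pW * A) + pW * (η ^ 2 / 2) := by
        rw [hpA, hpW_def, Finset.mul_sum, Finset.sum_mul,
          ← Finset.sum_sub_distrib, ← Finset.sum_add_distrib]
        exact Finset.sum_congr rfl fun k _ => by ring
    _ = pW * (1 - η * A + η ^ 2 / 2) := by ring
  -- Step 3: bound the log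
  have hstep3 : Real.log (Z / pW) ≤ -η * A + η ^ 2 / 2 := by
    have h1 : Real.log (Z / pW) ≤ Z / pW - 1 :=
      Real.log_le_sub_one_of_pos (by positivity)
    have h2 : Z / pW ≤ 1 - η * A + η ^ 2 / 2 := by
      rw [div_le_iff₀ hpW_pos]
      linarith [hstep2]
    linarith
  -- Step 4: conclude
  have hB : uW * ∑ k ∈ W, (u k / uW) * c k = ∑ k ∈ W, u k * c k := by
    rw [Finset.mul_sum]
    refine Finset.sum_congr rfl fun k hk => ?_
    field_simp
  have hsum : ∑ k ∈ W, u k * (-η * c k) = -η * ∑ k ∈ W, u k * c k := by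
    rw [Finset.mul_sum]
    refine Finset.sum_congr rfl fun k hk => ?_
    ring
  rw [hstep1, hsum, ge_iff_le]
  have hlog := mul_le_mul_of_nonneg_left hstep3 huW.le
  nlinarith [hlog, hB]
end

section
/- Specialist Hedge regret bound: Run the Specialist Hedge algorithm with learning rate η > 0 and initial probability distribution p₁ on a finite specialist set E. On each trial τ = 1..T, a nonempty awake set W^τ ⊆ E is revealed, the algorithm plays v^τ(k) = p_τ(k)/p_τ(W^τ) on W^τ, receives costs c^τ : W^τ → [0,1], and updates p_{τ+1} by multiplicatively reweighting awake specialists (with renormalization preserving total mass). Then for any probability distribution u on E (with u absolutely continuous w.r.t. p₁), setting u(W^τ) := Σ_{k∈W^τ} u(k) and ū^τ(k) := u(k)/u(W^τ): Σ_{τ=1}^T u(W^τ)·⟨v^τ − ū^τ, c^τ⟩ ≤ (1/η)·D(u‖p₁) + (η/2)·Σ_{τ=1}^T u(W^τ). -/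
open scoped BigOperators

lemma relEnt_nonneg' {E : Type*} [Fintype E] (u q : E → ℝ)
    (hu : ∀ k, 0 ≤ u k) (hq : ∀ k, 0 < q k)
    (hus : ∑ k, u k = 1) (hqs : ∑ k, q k = 1) : 0 ≤ relEnt u q := by
  have key : ∀ k, u k - q k ≤ u k * Real.log (u k / q k) := by
    intro k
    rcases eq_or_lt_of_le (hu k) with h0 | hpos
    · simp [← h0]; linarith [(hq k).le]
    · have h1 : 0 < q k / u k := div_pos (hq k) hpos
      have h2 : Real.log (q k / u k) ≤ q k / u k - 1 := Real.log_le_sub_one_of_pos h1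
      have h3 : Real.log (u k / q k) = - Real.log (q k / u k) := by
        rw [← Real.log_inv]; congr 1; field_simp
      rw [h3]
      have h4 : u k * (q k / u k - 1) = q k - u k := by field_simp
      nlinarith [mul_le_mul_of_nonneg_left h2 hpos.le]
  calc (0:ℝ) = ∑ k, (u k - q k) := by rw [Finset.sum_sub_distrib, hus, hqs]; ring
  _ ≤ _ := Finset.sum_le_sum (fun k _ => key k)

/-- Specialist Hedge regret bound (Theorem `allospecth`). -/
theorem specialist_hedge_regret {E : Type*} [Fintype E] [DecidableEq E]
    (η : ℝ) (hη : 0 < η) (T : ℕ)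
    (W : ℕ → Finset E) (hW : ∀ τ, (W τ).Nonempty)
    (c : ℕ → E → ℝ) (hc : ∀ τ, ∀ k ∈ W τ, 0 ≤ c τ k ∧ c τ k ≤ 1)
    (p : ℕ → E → ℝ)
    (hp0_pos : ∀ k, 0 < p 0 k) (hp0_sum : ∑ k, p 0 k = 1)
    (hupdate : ∀ τ k, p (τ + 1) k = if k ∈ W τ then
        p τ k * Real.exp (-η * c τ k) * (∑ k' ∈ W τ, p τ k') /
          (∑ k' ∈ W τ, p τ k' * Real.exp (-η * c τ k'))
      else p τ k)
    (u : E → ℝ) (hu_nonneg : ∀ k, 0 ≤ u k) (hu_sum : ∑ k, u k = 1)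
    (hu_ac : ∀ k, p 0 k = 0 → u k = 0)
    (huW : ∀ τ, τ < T → 0 < ∑ k ∈ W τ, u k) :
    ∑ τ ∈ Finset.range T,
        (∑ k ∈ W τ, u k) *
          ∑ k ∈ W τ, (p τ k / (∑ k' ∈ W τ, p τ k') - u k / (∑ k' ∈ W τ, u k')) * c τ k
      ≤ (1 / η) * relEnt u (p 0) + (η / 2) * ∑ τ ∈ Finset.range T, ∑ k ∈ W τ, u k := by
  -- positivity of p
  have hppos : ∀ τ k, 0 < p τ k := by
    intro τ
    induction τ with
    | zero => exact hp0_pos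
    | succ τ ih =>
      intro k
      have hZ : 0 < ∑ k' ∈ W τ, p τ k' * Real.exp (-η * c τ k') :=
        Finset.sum_pos (fun k' _ => mul_pos (ih k') (Real.exp_pos _)) (hW τ)
      have hP : 0 < ∑ k' ∈ W τ, p τ k' := Finset.sum_pos (fun k' _ => ih k') (hW τ)
      rw [hupdate τ k]
      split_ifs with hk
      · exact div_pos (mul_pos (mul_pos (ih k) (Real.exp_pos _)) hP) hZ
      · exact ih k
  -- normalization of p
  have hpsum : ∀ τ, ∑ k, p τ k = 1 := by
    intro τ
    induction τ with
    | zero => exact hp0_sum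
    | succ τ ih =>
      have hZ : 0 < ∑ k' ∈ W τ, p τ k' * Real.exp (-η * c τ k') :=
        Finset.sum_pos (fun k' _ => mul_pos (hppos τ k') (Real.exp_pos _)) (hW τ)
      calc ∑ k, p (τ+1) k
          = ∑ k ∈ Finset.univ.filter (fun k => k ∈ W τ), p (τ+1) k
            + ∑ k ∈ Finset.univ.filter (fun k => ¬ k ∈ W τ), p (τ+1) k :=
            (Finset.sum_filter_add_sum_filter_not _ _ _).symm
        _ = ∑ k ∈ W τ, p τ k * Real.exp (-η * c τ k) * (∑ k' ∈ W τ, p τ k') /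
              (∑ k' ∈ W τ, p τ k' * Real.exp (-η * c τ k'))
            + ∑ k ∈ Finset.univ.filter (fun k => ¬ k ∈ W τ), p τ k := by
            rw [Finset.filter_univ_mem]
            congr 1
            · exact Finset.sum_congr rfl (fun k hk => by rw [hupdate τ k, if_pos hk])
            · exact Finset.sum_congr rfl (fun k hk => by
                rw [hupdate τ k, if_neg (Finset.mem_filter.mp hk).2])
        _ = ∑ k ∈ W τ, p τ k
            + ∑ k ∈ Finset.univ.filter (fun k => ¬ k ∈ W τ), p τ k := by
            congr 1
            rw [← Finset.sum_div, ← Finset.sum_mul, mul_comm, mul_div_assoc,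
              div_self hZ.ne', mul_one]
        _ = ∑ k ∈ Finset.univ.filter (fun k => k ∈ W τ), p τ k
            + ∑ k ∈ Finset.univ.filter (fun k => ¬ k ∈ W τ), p τ k := by
            rw [Finset.filter_univ_mem]
        _ = ∑ k, p τ k := Finset.sum_filter_add_sum_filter_not _ _ _
        _ = 1 := ih
  -- per-trial bound
  have hstep : ∀ τ, τ < T →
      (∑ k ∈ W τ, u k) *
        ∑ k ∈ W τ, (p τ k / (∑ k' ∈ W τ, p τ k') - u k / (∑ k' ∈ W τ, u k')) * c τ k
      ≤ (1/η) * (relEnt u (p τ) - relEnt u (p (τ+1))) + (η/2) * ∑ k ∈ W τ, u k := by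
    intro τ hτ
    set P := ∑ k' ∈ W τ, p τ k' with hPdef
    set Z := ∑ k' ∈ W τ, p τ k' * Real.exp (-η * c τ k') with hZdef
    set uW := ∑ k ∈ W τ, u k with huWdef
    have hP : 0 < P := Finset.sum_pos (fun k' _ => hppos τ k') (hW τ)
    have hZ : 0 < Z := Finset.sum_pos (fun k' _ => mul_pos (hppos τ k') (Real.exp_pos _)) (hW τ)
    have huWpos : 0 < uW := huW τ hτ
    set S := ∑ k ∈ W τ, (p τ k / P) * c τ k with hSdef
    set A := ∑ k ∈ W τ, u k * c τ k with hAdef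
    set L := Real.log (P / Z) with hLdef
    -- Step A: entropy difference identity
    have hA : relEnt u (p τ) - relEnt u (p (τ+1)) = -η * A + uW * L := by
      have hterm : ∀ k, u k * Real.log (u k / p τ k) - u k * Real.log (u k / p (τ+1) k)
          = if k ∈ W τ then u k * (-η * c τ k + L) else 0 := by
        intro k
        by_cases hk : k ∈ W τ
        · rw [if_pos hk]
          rcases eq_or_lt_of_le (hu_nonneg k) with h0 | hupos
          · simp [← h0]
          · have hp1 : 0 < p τ k := hppos τ k
            have hp2eq : p (τ+1) k = p τ k * Real.exp (-η * c τ k) * P / Z := by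
              rw [hupdate τ k, if_pos hk]
            have hp2 : 0 < p (τ+1) k := hppos (τ+1) k
            have hlog2 : Real.log (p (τ+1) k)
                = Real.log (p τ k) + (-η * c τ k) + Real.log P - Real.log Z := by
              rw [hp2eq, Real.log_div (by positivity) hZ.ne',
                Real.log_mul (by positivity) hP.ne',
                Real.log_mul hp1.ne' (Real.exp_ne_zero _), Real.log_exp]
            have hLeq : L = Real.log P - Real.log Z := Real.log_div hP.ne' hZ.ne'
            rw [Real.log_div hupos.ne' hp1.ne', Real.log_div hupos.ne' hp2.ne',
              hlog2, hLeq]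
            ring
        · rw [if_neg hk, hupdate τ k, if_neg hk, sub_self]
      calc relEnt u (p τ) - relEnt u (p (τ+1))
          = ∑ k, (u k * Real.log (u k / p τ k) - u k * Real.log (u k / p (τ+1) k)) := by
            rw [relEnt, relEnt, ← Finset.sum_sub_distrib]
        _ = ∑ k, (if k ∈ W τ then u k * (-η * c τ k + L) else 0) :=
            Finset.sum_congr rfl (fun k _ => hterm k)
        _ = ∑ k ∈ W τ, u k * (-η * c τ k + L) := by
            rw [Finset.sum_ite_mem, Finset.univ_inter]
        _ = -η * A + uW * L := by
            rw [hAdef, huWdef, Finset.mul_sum, Finset.sum_mul, ← Finset.sum_add_distrib]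
            exact Finset.sum_congr rfl (fun k _ => by ring)
    -- Step B: log bound
    have hLB : η * S - η^2/2 ≤ L := by
      have hZP : Z / P ≤ 1 - η * S + η^2/2 := by
        have h1 : Z / P = ∑ k ∈ W τ, (p τ k / P) * Real.exp (-η * c τ k) := by
          rw [hZdef, Finset.sum_div]
          exact Finset.sum_congr rfl (fun k _ => by ring)
        have h2 : ∑ k ∈ W τ, (p τ k / P) * Real.exp (-η * c τ k)
            ≤ ∑ k ∈ W τ, (p τ k / P) * (1 - η * c τ k + η^2/2) := by
          apply Finset.sum_le_sum
          intro k hk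
          obtain ⟨hc0, hc1⟩ := hc τ k hk
          apply mul_le_mul_of_nonneg_left _ (div_nonneg (hppos τ k).le hP.le)
          have hq := exp_neg_le_quad (x := η * c τ k) (mul_nonneg hη.le hc0)
          rw [neg_mul]
          calc Real.exp (-(η * c τ k)) ≤ 1 - η * c τ k + (η * c τ k)^2/2 := hq
            _ ≤ 1 - η * c τ k + η^2/2 := by
              nlinarith [mul_nonneg (sq_nonneg η)
                (mul_nonneg (sub_nonneg.mpr hc1) (by linarith : (0:ℝ) ≤ 1 + c τ k))]
        have hsum1 : ∑ k ∈ W τ, p τ k / P = 1 := by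
          rw [← Finset.sum_div, ← hPdef, div_self hP.ne']
        have h3 : ∑ k ∈ W τ, (p τ k / P) * (1 - η * c τ k + η^2/2)
            = (1 + η^2/2) * (∑ k ∈ W τ, p τ k / P) - η * S := by
          rw [hSdef, Finset.mul_sum, Finset.mul_sum, ← Finset.sum_sub_distrib]
          exact Finset.sum_congr rfl (fun k _ => by ring)
        rw [h1]
        refine h2.trans ?_
        rw [h3, hsum1]
        linarith
      have hlog : Real.log (Z / P) ≤ Z / P - 1 :=
        Real.log_le_sub_one_of_pos (div_pos hZ hP)
      have hneg : L = - Real.log (Z / P) := by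
        rw [hLdef, ← Real.log_inv, inv_div]
      rw [hneg]
      linarith
    -- combine
    have hLHS : ∑ k ∈ W τ, (p τ k / P - u k / uW) * c τ k = S - A / uW := by
      rw [hSdef, hAdef, Finset.sum_div, ← Finset.sum_sub_distrib]
      exact Finset.sum_congr rfl (fun k _ => by ring)
    rw [hLHS, hA]
    have hexp : uW * (S - A / uW) = uW * S - A := by field_simp
    have hfrac : (1/η) * (-η * A + uW * L) = -A + uW * L / η := by field_simp
    rw [hexp, hfrac]
    have h3 : uW * S - η/2 * uW ≤ uW * L / η := by
      rw [le_div_iff₀ hη]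
      nlinarith [mul_le_mul_of_nonneg_left hLB huWpos.le]
    linarith
  -- telescope
  calc ∑ τ ∈ Finset.range T,
        (∑ k ∈ W τ, u k) *
          ∑ k ∈ W τ, (p τ k / (∑ k' ∈ W τ, p τ k') - u k / (∑ k' ∈ W τ, u k')) * c τ k
      ≤ ∑ τ ∈ Finset.range T,
          ((1/η) * (relEnt u (p τ) - relEnt u (p (τ+1))) + (η/2) * ∑ k ∈ W τ, u k) :=
        Finset.sum_le_sum (fun τ hτ => hstep τ (Finset.mem_range.mp hτ))
    _ = (1/η) * (relEnt u (p 0) - relEnt u (p T))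
        + (η/2) * ∑ τ ∈ Finset.range T, ∑ k ∈ W τ, u k := by
        rw [Finset.sum_add_distrib, ← Finset.mul_sum, ← Finset.mul_sum,
          Finset.sum_range_sub' (fun τ => relEnt u (p τ))]
    _ ≤ (1 / η) * relEnt u (p 0) + (η / 2) * ∑ τ ∈ Finset.range T, ∑ k ∈ W τ, u k := by
        have hT : 0 ≤ relEnt u (p T) :=
          relEnt_nonneg' u (p T) hu_nonneg (hppos T) hu_sum (hpsum T)
        have h1η : 0 < 1/η := by positivity
        nlinarith
end
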